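/- For fixed Hermitian positive semidefinite matrix-valued affine maps λ ↦ Σ_n(λ) = σ² I + Σ_i λ_{n,i} A_{n,i}, where each A_{n,i} is Hermitian positive semidefinite and σ² > 0, the function λ ↦ −(1/M) Σ_{n=1}^M log₂ Σ_{t=1}^M det(Σ_n(λ) + Σ_t(λ))^{-1} is concave on the nonnegative orthant. -/

import Mathlib

open Real Matrix
open scoped ComplexOrder

section auxlemmas
variable {n : Type*} [Fintype n] [DecidableEq n]

private lemma holder2 {ι : Type*} (s : Finset ι) (u v : ι → ℝ)
    (hu : ∀ i ∈ s, 0 < u i) (hv : ∀ i ∈ s, 0 < v i)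
    {a b : ℝ} (ha : 0 ≤ a) (hb : 0 ≤ b) (hab : a + b = 1) :
    ∑ i ∈ s, u i ^ a * v i ^ b ≤ (∑ i ∈ s, u i) ^ a * (∑ i ∈ s, v i) ^ b := by
  rcases s.eq_empty_or_nonempty with rfl | hs
  · simp [Real.rpow_natCast]
    positivity
  have hU : 0 < ∑ i ∈ s, u i := Finset.sum_pos hu hs
  have hV : 0 < ∑ i ∈ s, v i := Finset.sum_pos hv hs
  set U := ∑ i ∈ s, u i
  set V := ∑ i ∈ s, v i
  have key : ∑ i ∈ s, u i ^ a * v i ^ b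
      = U ^ a * V ^ b * ∑ i ∈ s, (u i / U) ^ a * (v i / V) ^ b := by
    rw [Finset.mul_sum]
    refine Finset.sum_congr rfl fun i hi => ?_
    rw [Real.div_rpow (hu i hi).le hU.le, Real.div_rpow (hv i hi).le hV.le]
    field_simp
  rw [key]
  have hle : ∑ i ∈ s, (u i / U) ^ a * (v i / V) ^ b ≤ 1 := by
    calc ∑ i ∈ s, (u i / U) ^ a * (v i / V) ^ b
        ≤ ∑ i ∈ s, (a * (u i / U) + b * (v i / V)) := by
          refine Finset.sum_le_sum fun i hi => ?_
          exact Real.geom_mean_le_arith_mean2_weighted ha hb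
            (div_nonneg (hu i hi).le hU.le) (div_nonneg (hv i hi).le hV.le) hab
      _ = a * ((∑ i ∈ s, u i) / U) + b * ((∑ i ∈ s, v i) / V) := by
          rw [Finset.sum_add_distrib, ← Finset.mul_sum, ← Finset.mul_sum,
            ← Finset.sum_div, ← Finset.sum_div]
      _ = 1 := by rw [div_self hU.ne', div_self hV.ne', mul_one, mul_one, hab]
  calc U ^ a * V ^ b * ∑ i ∈ s, (u i / U) ^ a * (v i / V) ^ b
      ≤ U ^ a * V ^ b * 1 := mul_le_mul_of_nonneg_left hle (by positivity)
    _ = U ^ a * V ^ b := mul_one _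

private lemma posDef_conj {Q B : Matrix n n ℂ} (hQ : Q.PosDef) (hB : IsUnit B) :
    (Bᴴ * Q * B).PosDef := by
  refine Matrix.PosDef.of_dotProduct_mulVec_pos (Matrix.isHermitian_conjTranspose_mul_mul B hQ.1) fun x hx => ?_
  have hinj := Matrix.mulVec_injective_iff_isUnit.mpr hB
  have hBx : B *ᵥ x ≠ 0 := fun h => hx (hinj (by simpa using h))
  simpa only [star_mulVec, dotProduct_mulVec, vecMul_vecMul] using hQ.dotProduct_mulVec_pos hBx

private lemma rsmulM {m : Type*} (a : ℝ) (P : Matrix m m ℂ) : a • P = (a : ℂ) • P := by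
  ext i j; simp [Complex.real_smul]

private lemma det_re_of_posDef {P : Matrix n n ℂ} (hP : P.PosDef) :
    P.det = (P.det.re : ℂ) := by
  have h := hP.det_pos
  rw [Complex.lt_def] at h
  exact Complex.ext rfl (by simpa using h.2.symm)

private lemma det_re_pos {P : Matrix n n ℂ} (hP : P.PosDef) : 0 < P.det.re := by
  have := hP.det_pos
  rw [Complex.lt_def] at this
  simpa using this.1

private lemma psd_rsmul {c : ℝ} (hc : 0 ≤ c) {A : Matrix n n ℂ} (hA : A.PosSemidef) :
    (c • A).PosSemidef := by
  rw [rsmulM]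
  refine Matrix.PosSemidef.of_dotProduct_mulVec_nonneg ?_ fun x => ?_
  · have : ((c : ℂ) • A)ᴴ = star (c : ℂ) • Aᴴ := Matrix.conjTranspose_smul (c : ℂ) A
    rw [Matrix.IsHermitian, this, hA.1.eq]
    norm_num
  · have h := hA.dotProduct_mulVec_nonneg x
    rw [Complex.le_def] at h ⊢
    have hmv : ((c : ℂ) • A) *ᵥ x = (c : ℂ) • (A *ᵥ x) := Matrix.smul_mulVec _ _ _
    rw [hmv]
    have heq : dotProduct (star x) ((c : ℂ) • (A *ᵥ x))
        = (c : ℂ) * dotProduct (star x) (A *ᵥ x) := by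
      rw [dotProduct_smul]; rfl
    rw [heq]
    constructor
    · simp only [Complex.mul_re, Complex.ofReal_re, Complex.ofReal_im, Complex.zero_re]
      nlinarith [mul_nonneg hc
        (show (0:ℝ) ≤ (dotProduct (star x) (A *ᵥ x)).re by simpa using h.1)]
    · simp only [Complex.mul_im, Complex.ofReal_re, Complex.ofReal_im, Complex.zero_im]
      have h2 : (dotProduct (star x) (A *ᵥ x)).im = 0 := by simpa using h.2.symm
      rw [h2]; ring

/-- Multiplicative concavity of `det` over PD Hermitian complex matrices. -/
private lemma det_combo {P Q : Matrix n n ℂ} (hP : P.PosDef) (hQ : Q.PosDef)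
    {a b : ℝ} (ha : 0 ≤ a) (hb : 0 ≤ b) (hab : a + b = 1) :
    P.det.re ^ a * Q.det.re ^ b ≤ ((a : ℝ) • P + (b : ℝ) • Q).det.re := by
  have hp : 0 < P.det.re := det_re_pos hP
  have hq : 0 < Q.det.re := det_re_pos hQ
  rcases eq_or_lt_of_le ha with rfl | ha'
  · have hb1 : b = 1 := by linarith
    subst hb1
    simp [Real.rpow_one]
  rcases eq_or_lt_of_le hb with rfl | hb'
  · have ha1 : a = 1 := by linarith
    subst ha1
    simp [Real.rpow_one]
  obtain ⟨R, hR, hRR⟩ : ∃ R : Matrix n n ℂ, R.PosSemidef ∧ R * R = P := by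
    open scoped MatrixOrder in
    exact ⟨CFC.sqrt P, (CFC.sqrt_nonneg P).posSemidef,
      CFC.sqrt_mul_sqrt_self P hP.posSemidef.nonneg⟩
  have hRdet : IsUnit R.det := by
    have hm : R.det * R.det = P.det := by rw [← Matrix.det_mul, hRR]
    refine isUnit_iff_ne_zero.mpr fun h0 => hP.det_pos.ne' ?_
    rw [← hm, h0, mul_zero]
  have hRunit : IsUnit R := (Matrix.isUnit_iff_isUnit_det R).mpr hRdet
  have h1 : R * R⁻¹ = 1 := Matrix.mul_nonsing_inv R hRdet
  have h2 : R⁻¹ * R = 1 := Matrix.nonsing_inv_mul R hRdet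
  set B := R⁻¹ with hBdef
  have hBH : Bᴴ = B := hR.1.inv
  have hBunit : IsUnit B := Matrix.isUnit_nonsing_inv_iff.mpr hRunit
  set C := B * Q * B with hCdef
  have hC : C.PosDef := by
    have := posDef_conj hQ hBunit
    rwa [hBH] at this
  set μ := hC.1.eigenvalues with hμdef
  have hμpos : ∀ i, 0 < μ i := hC.eigenvalues_pos
  have hmid : R * (B * Q * B) * R = Q := by
    simp only [← Matrix.mul_assoc]
    rw [h1, Matrix.one_mul, Matrix.mul_assoc, h2, Matrix.mul_one]
  have key : R * ((a : ℂ) • 1 + (b : ℂ) • C) * R = (a : ℂ) • P + (b : ℂ) • Q := by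
    rw [hCdef]
    rw [Matrix.mul_add, Matrix.add_mul, Matrix.mul_smul, Matrix.smul_mul, Matrix.mul_smul,
      Matrix.smul_mul, Matrix.mul_one, hRR, hmid]
  have hdet1 : ((a : ℂ) • P + (b : ℂ) • Q).det
      = P.det * ((a : ℂ) • (1 : Matrix n n ℂ) + (b : ℂ) • C).det := by
    rw [← key, Matrix.det_mul, Matrix.det_mul, mul_right_comm, ← Matrix.det_mul, hRR]
  have hdiag : ((a : ℂ) • (1 : Matrix n n ℂ) + (b : ℂ) • C).det
      = ∏ i, ((a : ℂ) + (b : ℂ) * (μ i : ℂ)) := by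
    have hsp := hC.1.spectral_theorem
    rw [Unitary.conjStarAlgAut_apply] at hsp
    set U : Matrix n n ℂ := (Matrix.IsHermitian.eigenvectorUnitary hC.1 : Matrix n n ℂ) with hUdef
    have hU : U * star U = 1 :=
      Matrix.mem_unitaryGroup_iff.mp (Matrix.IsHermitian.eigenvectorUnitary hC.1).2
    have hconj : (a : ℂ) • (1 : Matrix n n ℂ) + (b : ℂ) • C
        = U * ((a : ℂ) • 1 + (b : ℂ) • Matrix.diagonal (RCLike.ofReal ∘ μ)) * star U := by
      rw [Matrix.mul_add, Matrix.add_mul, Matrix.mul_smul, Matrix.smul_mul, Matrix.mul_smul,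
        Matrix.smul_mul, Matrix.mul_one, hU, ← hsp]
    have hUdet : U.det * (star U).det = 1 := by rw [← Matrix.det_mul, hU, Matrix.det_one]
    have hdd : (a : ℂ) • (1 : Matrix n n ℂ) + (b : ℂ) • Matrix.diagonal (RCLike.ofReal ∘ μ)
        = Matrix.diagonal (fun i => (a : ℂ) + (b : ℂ) * (μ i : ℂ)) := by
      ext i j
      by_cases h : i = j
      · subst h; simp [Matrix.diagonal, Matrix.one_apply]
      · simp [Matrix.diagonal, Matrix.one_apply, h]
    rw [hconj, Matrix.det_mul, Matrix.det_mul, mul_right_comm, hUdet, one_mul, hdd,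
      Matrix.det_diagonal]
  have hdetC : C.det = Q.det * (P.det)⁻¹ := by
    have hBdet : B.det = (R.det)⁻¹ := by
      rw [hBdef, Matrix.det_nonsing_inv, Ring.inverse_eq_inv]
    rw [hCdef, Matrix.det_mul, Matrix.det_mul, hBdet]
    have : P.det = R.det * R.det := by rw [← Matrix.det_mul, hRR]
    rw [this, mul_inv]
    ring
  have hprodμ : ∏ i, μ i = Q.det.re / P.det.re := by
    have h1' : ((∏ i, μ i : ℝ) : ℂ) = C.det := by
      rw [hC.1.det_eq_prod_eigenvalues]
      push_cast
      rfl
    rw [hdetC, det_re_of_posDef hP, det_re_of_posDef hQ] at h1'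
    have : ((∏ i, μ i : ℝ) : ℂ) = ((Q.det.re / P.det.re : ℝ) : ℂ) := by
      rw [h1']; push_cast; ring
    exact_mod_cast this
  have hre : ((a : ℂ) • P + (b : ℂ) • Q).det.re = P.det.re * ∏ i, (a + b * μ i) := by
    rw [hdet1, hdiag, det_re_of_posDef hP]
    have : (∏ i, ((a : ℂ) + (b : ℂ) * (μ i : ℂ))) = ((∏ i, (a + b * μ i) : ℝ) : ℂ) := by
      push_cast; rfl
    rw [this, ← Complex.ofReal_mul, Complex.ofReal_re]
    simp
  rw [rsmulM, rsmulM, hre]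
  have hprodle : (∏ i, μ i) ^ b ≤ ∏ i, (a + b * μ i) := by
    rw [← Real.finset_prod_rpow _ _ (fun i _ => (hμpos i).le) b]
    refine Finset.prod_le_prod (fun i _ => Real.rpow_nonneg (hμpos i).le b) fun i _ => ?_
    have := Real.geom_mean_le_arith_mean2_weighted ha hb zero_le_one (hμpos i).le hab
    simpa using this
  have heq : P.det.re ^ a * Q.det.re ^ b = P.det.re * (∏ i, μ i) ^ b := by
    rw [hprodμ, Real.div_rpow hq.le hp.le]
    rw [show a = 1 - b by linarith, Real.rpow_sub hp, Real.rpow_one]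
    field_simp
  rw [heq]
  exact mul_le_mul_of_nonneg_left hprodle hp.le

end auxlemmas

/-- the variable part of the spectral-efficiency lower bound,
`λ ↦ −(1/M) Σ_n log₂ Σ_t det(Σ_n(λ) + Σ_t(λ))⁻¹` with affine PSD maps
`Σ_n(λ) = σ²I + Σᵢ λ_{n,i} A_{n,i}`, is concave on the nonnegative orthant. -/
theorem RLB_variable_part_concave
    (N k M : ℕ) (σ2 : ℝ) (hσ : 0 < σ2)
    (A : Fin M → Fin k → Matrix (Fin N) (Fin N) ℂ)
    (hA : ∀ n i, (A n i).PosSemidef)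
    (S : (Fin M × Fin k → ℝ) → Fin M → Matrix (Fin N) (Fin N) ℂ)
    (hS : ∀ l n, S l n = σ2 • (1 : Matrix (Fin N) (Fin N) ℂ) + ∑ i, l (n, i) • A n i) :
    ConcaveOn ℝ {l : Fin M × Fin k → ℝ | ∀ j, 0 ≤ l j}
      (fun l => -(1 / M : ℝ) * ∑ n, Real.logb 2 (∑ t, (((S l n + S l t).det.re))⁻¹)) := by
  classical
  constructor
  · intro x hx y hy a b ha hb hab j
    have h1 := hx j
    have h2 := hy j
    simp only [Pi.add_apply, Pi.smul_apply, smul_eq_mul]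
    exact add_nonneg (mul_nonneg ha h1) (mul_nonneg hb h2)
  intro x hx y hy a b ha hb hab
  -- positive definiteness of S l n + S l t on the orthant
  have hSpd : ∀ (l : Fin M × Fin k → ℝ), (∀ j, 0 ≤ l j) → ∀ n t : Fin M,
      (S l n + S l t).PosDef := by
    intro l hl n t
    have hpd : ∀ m : Fin M, (S l m).PosDef := by
      intro m
      rw [hS l m]
      apply Matrix.PosDef.add_posSemidef
      · have hid : (σ2 : ℝ) • (1 : Matrix (Fin N) (Fin N) ℂ)
            = Matrix.diagonal (fun _ => (σ2 : ℂ)) := by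
          ext i j
          by_cases h : i = j
          · subst h; simp [Matrix.diagonal, Matrix.one_apply, Complex.real_smul]
          · simp [Matrix.diagonal, Matrix.one_apply, h, Complex.real_smul]
        rw [hid, Matrix.posDef_diagonal_iff]
        intro i
        exact Complex.zero_lt_real.mpr hσ
      · refine Finset.sum_induction _ _ (fun p q hp hq => hp.add hq) Matrix.PosSemidef.zero ?_
        intro i _
        exact psd_rsmul (hl (m, i)) (hA m i)
    exact (hpd n).add (hpd t)
  -- affinity of S
  have haffS : ∀ m : Fin M, S (a • x + b • y) m = a • S x m + b • S y m := by
    intro m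
    have h1 : a • (σ2 • (1 : Matrix (Fin N) (Fin N) ℂ)) + b • (σ2 • (1 : Matrix (Fin N) (Fin N) ℂ))
        = σ2 • (1 : Matrix (Fin N) (Fin N) ℂ) := by
      rw [smul_smul, smul_smul, ← add_smul, ← add_mul, hab, one_mul]
    have h2 : a • (∑ i, x (m, i) • A m i) + b • (∑ i, y (m, i) • A m i)
        = ∑ i, (a • x + b • y) (m, i) • A m i := by
      rw [Finset.smul_sum, Finset.smul_sum, ← Finset.sum_add_distrib]
      refine Finset.sum_congr rfl fun i _ => ?_
      simp only [Pi.add_apply, Pi.smul_apply, smul_eq_mul, smul_smul, ← add_smul]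
    have h3 : a • (σ2 • (1 : Matrix (Fin N) (Fin N) ℂ) + ∑ i, x (m, i) • A m i)
        + b • (σ2 • (1 : Matrix (Fin N) (Fin N) ℂ) + ∑ i, y (m, i) • A m i)
        = (a • (σ2 • (1 : Matrix (Fin N) (Fin N) ℂ)) + b • (σ2 • (1 : Matrix (Fin N) (Fin N) ℂ)))
          + (a • (∑ i, x (m, i) • A m i) + b • (∑ i, y (m, i) • A m i)) := by
      rw [smul_add, smul_add]; abel
    rw [hS, hS, hS, h3, h1, h2]
  have haff : ∀ n t : Fin M, S (a • x + b • y) n + S (a • x + b • y) t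
      = a • (S x n + S x t) + b • (S y n + S y t) := by
    intro n t
    rw [haffS, haffS, smul_add, smul_add]
    abel
  -- per-n inequality
  have hL : ∀ n : Fin M,
      Real.logb 2 (∑ t, (((S (a • x + b • y) n + S (a • x + b • y) t).det.re))⁻¹)
      ≤ a * Real.logb 2 (∑ t, (((S x n + S x t).det.re))⁻¹)
        + b * Real.logb 2 (∑ t, (((S y n + S y t).det.re))⁻¹) := by
    intro n
    set u : Fin M → ℝ := fun t => (((S x n + S x t).det.re))⁻¹ with hu
    set v : Fin M → ℝ := fun t => (((S y n + S y t).det.re))⁻¹ with hv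
    set w : Fin M → ℝ := fun t => (((S (a • x + b • y) n + S (a • x + b • y) t).det.re))⁻¹ with hw
    have hxpd : ∀ t, (S x n + S x t).PosDef := hSpd x hx n
    have hypd : ∀ t, (S y n + S y t).PosDef := hSpd y hy n
    have hzpd : ∀ t, (S (a • x + b • y) n + S (a • x + b • y) t).PosDef := by
      intro t
      refine hSpd _ ?_ n t
      intro j
      simp only [Pi.add_apply, Pi.smul_apply, smul_eq_mul]
      exact add_nonneg (mul_nonneg ha (hx j)) (mul_nonneg hb (hy j))
    have hupos : ∀ t, 0 < u t := fun t => inv_pos.mpr (det_re_pos (hxpd t))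
    have hvpos : ∀ t, 0 < v t := fun t => inv_pos.mpr (det_re_pos (hypd t))
    have hwpos : ∀ t, 0 < w t := fun t => inv_pos.mpr (det_re_pos (hzpd t))
    have hwle : ∀ t, w t ≤ u t ^ a * v t ^ b := by
      intro t
      have hcombo := det_combo (hxpd t) (hypd t) ha hb hab
      rw [← haff n t] at hcombo
      have hpx := det_re_pos (hxpd t)
      have hpy := det_re_pos (hypd t)
      calc w t ≤ ((S x n + S x t).det.re ^ a * (S y n + S y t).det.re ^ b)⁻¹ :=
            inv_anti₀ (by positivity) hcombo
        _ = u t ^ a * v t ^ b := by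
            rw [mul_inv, ← Real.inv_rpow hpx.le, ← Real.inv_rpow hpy.le]
    have hsum1 : ∑ t, w t ≤ ∑ t, u t ^ a * v t ^ b :=
      Finset.sum_le_sum fun t _ => hwle t
    have hsum2 := holder2 Finset.univ u v (fun t _ => hupos t) (fun t _ => hvpos t) ha hb hab
    have hWpos : 0 < ∑ t, w t :=
      Finset.sum_pos (fun t _ => hwpos t) ⟨n, Finset.mem_univ n⟩
    have hUpos : 0 < ∑ t, u t :=
      Finset.sum_pos (fun t _ => hupos t) ⟨n, Finset.mem_univ n⟩
    have hVpos : 0 < ∑ t, v t :=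
      Finset.sum_pos (fun t _ => hvpos t) ⟨n, Finset.mem_univ n⟩
    calc Real.logb 2 (∑ t, w t)
        ≤ Real.logb 2 ((∑ t, u t) ^ a * (∑ t, v t) ^ b) :=
          Real.logb_le_logb_of_le one_lt_two hWpos (le_trans hsum1 hsum2)
      _ = a * Real.logb 2 (∑ t, u t) + b * Real.logb 2 (∑ t, v t) := by
          rw [Real.logb_mul (ne_of_gt (Real.rpow_pos_of_pos hUpos a))
            (ne_of_gt (Real.rpow_pos_of_pos hVpos b)),
            Real.logb_rpow_eq_mul_logb_of_pos hUpos, Real.logb_rpow_eq_mul_logb_of_pos hVpos]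
  -- assemble
  have hsum : ∑ n, Real.logb 2 (∑ t, (((S (a • x + b • y) n + S (a • x + b • y) t).det.re))⁻¹)
      ≤ a * (∑ n, Real.logb 2 (∑ t, (((S x n + S x t).det.re))⁻¹))
        + b * (∑ n, Real.logb 2 (∑ t, (((S y n + S y t).det.re))⁻¹)) := by
    calc ∑ n, Real.logb 2 (∑ t, (((S (a • x + b • y) n + S (a • x + b • y) t).det.re))⁻¹)
        ≤ ∑ n, (a * Real.logb 2 (∑ t, (((S x n + S x t).det.re))⁻¹)
          + b * Real.logb 2 (∑ t, (((S y n + S y t).det.re))⁻¹)) :=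
          Finset.sum_le_sum fun n _ => hL n
      _ = _ := by rw [Finset.sum_add_distrib, Finset.mul_sum, Finset.mul_sum]
  have hMnn : (0:ℝ) ≤ 1 / M := by positivity
  have hfin := mul_le_mul_of_nonneg_left hsum hMnn
  simp only [smul_eq_mul]
  calc a * (-(1 / M : ℝ) * ∑ n, Real.logb 2 (∑ t, (((S x n + S x t).det.re))⁻¹))
      + b * (-(1 / M : ℝ) * ∑ n, Real.logb 2 (∑ t, (((S y n + S y t).det.re))⁻¹))
      = -((1 / M : ℝ) * (a * (∑ n, Real.logb 2 (∑ t, (((S x n + S x t).det.re))⁻¹))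
        + b * (∑ n, Real.logb 2 (∑ t, (((S y n + S y t).det.re))⁻¹)))) := by ring
    _ ≤ -((1 / M : ℝ)
        * ∑ n, Real.logb 2 (∑ t, (((S (a • x + b • y) n + S (a • x + b • y) t).det.re))⁻¹)) :=
          neg_le_neg hfin
    _ = -(1 / M : ℝ)
        * ∑ n, Real.logb 2 (∑ t, (((S (a • x + b • y) n + S (a • x + b • y) t).det.re))⁻¹) := by
          ring
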